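/- Let A be a k-algebra over a field k. Then A° ≅ k as coalgebras if and only if A admits an augmentation A → k and every finite-dimensional A-module is a direct sum of copies of the module k. -/

import Mathlib

open TensorProduct

universe u

section MeasuringPreamble

variable {k : Type u} [CommRing k]

/-- The convolution product of two linear maps `C →ₗ[k] B` from a coalgebra `C` to an
algebra `B`: `f * g = μ_B ∘ (f ⊗ g) ∘ Δ_C`. -/
noncomputable def convMulL {C B : Type u} [AddCommGroup C] [Module k C] [Coalgebra k C]
    [Ring B] [Algebra k B] (f g : C →ₗ[k] B) : C →ₗ[k] B :=
  LinearMap.mul' k B ∘ₗ TensorProduct.map f g ∘ₗ Coalgebra.comul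

/-- The convolution unit `ι_B ∘ ε_C : C →ₗ[k] B`. -/
noncomputable def convOneL {C B : Type u} [AddCommGroup C] [Module k C] [Coalgebra k C]
    [Ring B] [Algebra k B] : C →ₗ[k] B :=
  Algebra.linearMap k B ∘ₗ Coalgebra.counit

/-- `φ : A →ₗ[k] Hom_k(C,B)` is a measuring, i.e. an algebra morphism from `A` to the
convolution algebra `Hom_k(C,B)`. -/
def IsMeasuring {A C B : Type u} [Ring A] [Algebra k A] [AddCommGroup C] [Module k C]
    [Coalgebra k C] [Ring B] [Algebra k B] (φ : A →ₗ[k] C →ₗ[k] B) : Prop :=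
  φ 1 = convOneL (k := k) ∧ ∀ a a' : A, φ (a * a') = convMulL (φ a) (φ a')

/-- Restriction of a measuring along a linear map `g : C →ₗ[k] C'`. -/
noncomputable def measRestrict {A C C' B : Type u} [Ring A] [Algebra k A]
    [AddCommGroup C] [Module k C] [AddCommGroup C'] [Module k C']
    [Ring B] [Algebra k B]
    (g : C →ₗ[k] C') (φ : A →ₗ[k] C' →ₗ[k] B) : A →ₗ[k] C →ₗ[k] B :=
  ((LinearMap.llcomp k C C' B).flip g).comp φ

/-- `(P, e)` is a universal measuring coalgebra for the algebras `A` and `B`: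
for every coalgebra `C`, measurings `A →ₗ[k] Hom_k(C,B)` (i.e. algebra morphisms into
the convolution algebra) are in bijection with coalgebra morphisms `C →ₗc[k] P`,
naturally in `C`. -/
structure IsUniversalMeasuring (A B P : Type u) [Ring A] [Algebra k A]
    [Ring B] [Algebra k B] [AddCommGroup P] [Module k P] [Coalgebra k P] where
  equiv : ∀ (C : Type u) [AddCommGroup C] [Module k C] [Coalgebra k C],
    {φ : A →ₗ[k] C →ₗ[k] B // IsMeasuring φ} ≃ (C →ₗc[k] P)
  naturality : ∀ (C C' : Type u) [AddCommGroup C] [Module k C] [Coalgebra k C]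
    [AddCommGroup C'] [Module k C'] [Coalgebra k C'] (g : C →ₗc[k] C')
    (φ : {φ : A →ₗ[k] C' →ₗ[k] B // IsMeasuring φ})
    (h : IsMeasuring (measRestrict g.toLinearMap φ.1)),
    equiv C ⟨measRestrict g.toLinearMap φ.1, h⟩ =
      (equiv C' φ).comp g

end MeasuringPreamble

section Aux
variable {k : Type u} [CommRing k]

lemma measRestrict_apply {A C C' B : Type u} [Ring A] [Algebra k A]
    [AddCommGroup C] [Module k C] [AddCommGroup C'] [Module k C']
    [Ring B] [Algebra k B]
    (g : C →ₗ[k] C') (φ : A →ₗ[k] C' →ₗ[k] B) (a : A) :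
    measRestrict g φ a = (φ a) ∘ₗ g := rfl

lemma isMeasuring_restrict {A C C' B : Type u} [Ring A] [Algebra k A]
    [AddCommGroup C] [Module k C] [Coalgebra k C] [AddCommGroup C'] [Module k C']
    [Coalgebra k C'] [Ring B] [Algebra k B] (g : C →ₗc[k] C') {φ : A →ₗ[k] C' →ₗ[k] B}
    (h : IsMeasuring φ) : IsMeasuring (measRestrict (k := k) g.toLinearMap φ) := by
  constructor
  · rw [measRestrict_apply, h.1]
    unfold convOneL
    rw [LinearMap.comp_assoc, g.counit_comp]
  · intro a a'
    rw [measRestrict_apply, measRestrict_apply, measRestrict_apply, h.2]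
    unfold convMulL
    rw [LinearMap.comp_assoc, LinearMap.comp_assoc, ← g.map_comp_comul]
    congr 1
    rw [← LinearMap.comp_assoc, ← TensorProduct.map_comp]

noncomputable def augMeas {A : Type u} [Ring A] [Algebra k A] (aug : A →ₐ[k] k) :
    A →ₗ[k] k →ₗ[k] k :=
  (LinearMap.mul k k) ∘ₗ aug.toLinearMap

@[simp] lemma augMeas_apply {A : Type u} [Ring A] [Algebra k A] (aug : A →ₐ[k] k)
    (a : A) (x : k) : augMeas aug a x = aug a * x := rfl

lemma isMeasuring_augMeas {A : Type u} [Ring A] [Algebra k A] (aug : A →ₐ[k] k) :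
    IsMeasuring (augMeas aug) := by
  constructor
  · ext x
    simp [convOneL, Algebra.linearMap_apply]
  · intro a a'
    ext x
    simp [convMulL, CommSemiring.comul_apply, LinearMap.mul'_apply, mul_assoc]

end Aux
set_option maxRecDepth 8000

section Hit
variable {k : Type u} [CommRing k] {C : Type u} [AddCommGroup C] [Module k C] [Coalgebra k C]

open Coalgebra

/-- The action of a functional `f : C → k` on `C` by `x ↦ ∑ f(x₂) • x₁`. -/
noncomputable def hitL (f : C →ₗ[k] k) : C →ₗ[k] C :=
  (TensorProduct.rid k C).toLinearMap ∘ₗ (LinearMap.lTensor C f) ∘ₗ Coalgebra.comul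

lemma hitL_apply_repr (f : C →ₗ[k] k) {x : C} (r : Coalgebra.Repr k x (C × C)) :
    hitL f x = ∑ i ∈ r.index, f (r.right i) • r.left i := by
  simp only [hitL, LinearMap.coe_comp, Function.comp_apply, LinearEquiv.coe_coe, ← r.eq,
    map_sum, LinearMap.lTensor_tmul, TensorProduct.rid_tmul]

lemma hitL_add (f g : C →ₗ[k] k) : hitL (f + g) = hitL f + hitL g := by
  unfold hitL
  rw [LinearMap.lTensor_add, LinearMap.add_comp, LinearMap.comp_add]

lemma hitL_smul (c : k) (f : C →ₗ[k] k) : hitL (c • f) = c • hitL f := by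
  unfold hitL
  rw [LinearMap.lTensor_smul, LinearMap.smul_comp, LinearMap.comp_smul]

lemma hitL_convOne : hitL (convOneL (k := k) (C := C) (B := k)) = LinearMap.id := by
  ext x
  have r := Coalgebra.Repr.arbitrary k x
  have h := Coalgebra.sum_tmul_counit_eq (R := k) r
  have h2 := congrArg (TensorProduct.rid k C) h
  simp only [map_sum, TensorProduct.rid_tmul, one_smul] at h2
  simp only [hitL_apply_repr _ r, convOneL, LinearMap.coe_comp, Function.comp_apply,
    Algebra.linearMap_apply, Algebra.algebraMap_self, RingHom.id_apply, LinearMap.id_coe, id_eq]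
  simpa using h2

lemma counit_hitL (f : C →ₗ[k] k) (x : C) : counit (hitL f x) = f x := by
  have r := Coalgebra.Repr.arbitrary k x
  have h := Coalgebra.sum_counit_tmul_eq (R := k) r
  have h2 := congrArg (TensorProduct.lid k C) h
  simp only [map_sum, TensorProduct.lid_tmul, one_smul] at h2
  rw [hitL_apply_repr _ r, map_sum]
  calc ∑ i ∈ r.index, counit (f (r.right i) • r.left i)
      = f (∑ i ∈ r.index, counit (R := k) (r.left i) • r.right i) := by
        rw [map_sum]
        refine Finset.sum_congr rfl fun i _ => ?_
        rw [map_smul, map_smul, smul_eq_mul, smul_eq_mul, mul_comm]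
    _ = f x := by rw [h2]

/-- auxiliary map `x ⊗ (y ⊗ z) ↦ (f y * g z) • x`. -/
noncomputable def hitF (f g : C →ₗ[k] k) : C ⊗[k] (C ⊗[k] C) →ₗ[k] C :=
  (TensorProduct.rid k C).toLinearMap ∘ₗ
    LinearMap.lTensor C (LinearMap.mul' k k ∘ₗ TensorProduct.map f g)

@[simp] lemma hitF_tmul (f g : C →ₗ[k] k) (x y z : C) :
    hitF f g (x ⊗ₜ[k] (y ⊗ₜ[k] z)) = (f y * g z) • x := by
  simp [hitF, LinearMap.mul'_apply]

lemma hitL_convMul (f g : C →ₗ[k] k) :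
    hitL (convMulL f g) = (hitL f) ∘ₗ (hitL g) := by
  ext x
  have r := Coalgebra.Repr.arbitrary k x
  have key : ∀ y : C, ∀ t : C ⊗[k] C,
      hitF f g ((TensorProduct.assoc k C C C) (t ⊗ₜ[k] y)) =
        g y • (TensorProduct.rid k C) (LinearMap.lTensor C f t) := by
    intro y t
    induction t using TensorProduct.induction_on with
    | zero => simp
    | tmul p q => simp [TensorProduct.assoc_tmul, smul_smul, mul_comm]
    | add s t hs ht => simp [TensorProduct.add_tmul, hs, ht]
  have lhs : hitL (convMulL f g) x = hitF f g ((LinearMap.lTensor C comul) (comul x)) := by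
    rw [hitL_apply_repr _ r, ← r.eq, map_sum, map_sum]
    refine Finset.sum_congr rfl fun i _ => ?_
    rw [LinearMap.lTensor_tmul]
    -- goal : (convMulL f g) (r.right i) • r.left i = hitF f g (l i ⊗ Δ (r i))
    have : ∀ t : C ⊗[k] C, hitF f g (r.left i ⊗ₜ[k] t) =
        (LinearMap.mul' k k (TensorProduct.map f g t)) • r.left i := by
      intro t
      induction t using TensorProduct.induction_on with
      | zero => simp
      | tmul p q => simp [LinearMap.mul'_apply]
      | add s t hs ht => simp [TensorProduct.tmul_add, hs, ht, add_smul]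
    rw [this]
    rfl
  have rhs : hitL f (hitL g x) =
      hitF f g ((TensorProduct.assoc k C C C) ((LinearMap.rTensor C comul) (comul x))) := by
    calc hitL f (hitL g x)
        = ∑ i ∈ r.index, g (r.right i) •
            ((TensorProduct.rid k C) ((LinearMap.lTensor C f) (comul (r.left i)))) := by
          rw [hitL_apply_repr g r, map_sum]
          exact Finset.sum_congr rfl fun i _ => by rw [map_smul]; rfl
      _ = ∑ i ∈ r.index, hitF f g ((TensorProduct.assoc k C C C)
            ((LinearMap.rTensor C comul) (r.left i ⊗ₜ[k] r.right i))) :=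
          Finset.sum_congr rfl fun i _ => by rw [LinearMap.rTensor_tmul, key]
      _ = hitF f g ((TensorProduct.assoc k C C C) ((LinearMap.rTensor C comul) (comul x))) := by
          rw [← r.eq, map_sum, map_sum, map_sum]
  rw [LinearMap.comp_apply, lhs, rhs, ← Coalgebra.coassoc_apply]

end Hit
section Converse

open Coalgebra

variable {k : Type u} [Field k] {A : Type u} [Ring A] [Algebra k A]
  {C : Type u} [AddCommGroup C] [Module k C] [Coalgebra k C]

/-- The ring morphism `A → End_k(C)` induced by a measuring `A →ₗ[k] Hom(C, k)`. -/
noncomputable def measRingHom (Φ : A →ₗ[k] C →ₗ[k] k) (hΦ : IsMeasuring Φ) :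
    A →+* Module.End k C where
  toFun a := hitL (Φ a)
  map_one' := by show hitL (Φ 1) = 1; rw [hΦ.1, hitL_convOne]; rfl
  map_mul' a b := by show hitL (Φ (a * b)) = _; rw [hΦ.2, hitL_convMul]; rfl
  map_zero' := by
    show hitL (Φ 0) = 0
    rw [map_zero]
    unfold hitL
    rw [LinearMap.lTensor_zero, LinearMap.zero_comp, LinearMap.comp_zero]
  map_add' a b := by show hitL (Φ (a + b)) = _; rw [map_add, hitL_add]

lemma measRingHom_smul (Φ : A →ₗ[k] C →ₗ[k] k) (hΦ : IsMeasuring Φ) (c : k) (a : A) :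
    measRingHom Φ hΦ (c • a) = c • measRingHom Φ hΦ a := by
  show hitL (Φ (c • a)) = _
  rw [map_smul, hitL_smul]
  rfl

/-- Key lemma for the converse direction: if every finite-dimensional `A`-module is
a sum of copies of `k` via `aug`, then every measuring `A →ₗ[k] Hom(C,k)` is trivial. -/
lemma measuring_trivial_of_modules_trivial (aug : A →ₐ[k] k)
    (Φ : A →ₗ[k] C →ₗ[k] k) (hΦ : IsMeasuring Φ)
    (hmod : ∀ (M : Type u) [AddCommGroup M] [Module k M] [Module A M]
      [IsScalarTower k A M] [FiniteDimensional k M],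
      ∃ n : ℕ,
        letI : Module A k := Module.compHom k aug.toRingHom
        Nonempty (M ≃ₗ[A] (Fin n → k)))
    (a : A) (x : C) : Φ a x = aug a * Coalgebra.counit x := by
  letI : Module A C := Module.compHom C (measRingHom Φ hΦ)
  have hsmul : ∀ (b : A) (y : C), b • y = hitL (Φ b) y := fun _ _ => rfl
  letI : IsScalarTower k A C :=
    ⟨fun c b y => by
      rw [hsmul, hsmul]
      have : Φ (c • b) = c • Φ b := map_smul Φ c b
      rw [this, hitL_smul]
      rfl⟩
  -- a finite-dimensional A-submodule containing x
  set r := Coalgebra.Repr.arbitrary k x with hr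
  set P : Submodule A C := Submodule.span A {x} with hP
  set W : Submodule k C := Submodule.span k (insert x (r.left '' ↑r.index)) with hW
  have hax : ∀ b : A, b • x ∈ W := by
    intro b
    rw [hsmul, hitL_apply_repr _ r]
    refine Submodule.sum_mem _ fun i hi => Submodule.smul_mem _ _ ?_
    exact Submodule.subset_span (Set.mem_insert_iff.2 (Or.inr ⟨i, hi, rfl⟩))
  have hPW : P.restrictScalars k ≤ W := by
    intro y hy
    obtain ⟨b, rfl⟩ := Submodule.mem_span_singleton.1 hy
    exact hax b
  haveI : FiniteDimensional k W :=
    FiniteDimensional.span_of_finite k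
      ((r.index.finite_toSet.image r.left).insert x)
  haveI hfdres : FiniteDimensional k (P.restrictScalars k) :=
    Submodule.finiteDimensional_of_le hPW
  haveI : FiniteDimensional k P :=
    Module.Finite.equiv ((Submodule.restrictScalarsEquiv k A C P).restrictScalars k)
  obtain ⟨n, ⟨e⟩⟩ := hmod P
  letI : Module A k := Module.compHom k aug.toRingHom
  -- the action of `a` on any element of `P` is via `aug`
  have haug : ∀ m : P, a • m = algebraMap k A (aug a) • m := by
    intro m
    apply e.injective
    rw [map_smul, map_smul]
    funext i
    show aug.toRingHom a * (e m) i = (aug (algebraMap k A (aug a))) * (e m) i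
    rw [aug.commutes, Algebra.algebraMap_self_apply]
    rfl
  have hx : a • x = aug a • x := by
    have hxP : x ∈ P := Submodule.mem_span_singleton_self x
    have := congrArg (Subtype.val) (haug ⟨x, hxP⟩)
    simpa [algebraMap_smul] using this
  have : Φ a x = Coalgebra.counit (a • x) := by rw [hsmul, counit_hitL]
  rw [this, hx, map_smul, smul_eq_mul]

end Converse
section MatrixCoalgebra

open Coalgebra

variable {k : Type u} [CommRing k] {n : ℕ}

/-- The `(i,j)` coefficient functional on matrices. -/
def mEntry (i j : Fin n) : Matrix (Fin n) (Fin n) k →ₗ[k] k where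
  toFun c := c i j
  map_add' _ _ := rfl
  map_smul' _ _ := rfl

@[simp] lemma mEntry_apply (i j : Fin n) (c : Matrix (Fin n) (Fin n) k) :
    mEntry (k := k) i j c = c i j := rfl

/-- Elementary matrix. -/
def mE (i j : Fin n) : Matrix (Fin n) (Fin n) k :=
  fun p q => if p = i ∧ q = j then 1 else 0

lemma mE_apply (i j p q : Fin n) :
    mE (k := k) i j p q = if p = i ∧ q = j then 1 else 0 := rfl

lemma sum_mE_smul {V : Type*} [AddCommMonoid V] [Module k V] (i j : Fin n)
    (f : Fin n → Fin n → V) :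
    (∑ p, ∑ q, (mE (k := k) i j) p q • f p q) = f i j := by
  simp [mE_apply, ite_and, ite_smul]

lemma sum_smul_mE (c : Matrix (Fin n) (Fin n) k) :
    (∑ i, ∑ j, c i j • mE (k := k) i j) = c := by
  funext p q
  have h1 : ∀ (d : Matrix (Fin n) (Fin n) k) (s : Finset (Fin n × Fin n)),
      True := fun _ _ => trivial
  have : (∑ i, ∑ j, c i j • mE (k := k) i j) p q
      = ∑ i, ∑ j, c i j * (if p = i ∧ q = j then 1 else 0) := by
    rw [Matrix.sum_apply]
    refine Finset.sum_congr rfl fun i _ => ?_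
    rw [Matrix.sum_apply]
    rfl
  rw [this]
  simp [ite_and]

/-- Comultiplication on the matrix coalgebra. -/
noncomputable def matComul :
    Matrix (Fin n) (Fin n) k →ₗ[k] Matrix (Fin n) (Fin n) k ⊗[k] Matrix (Fin n) (Fin n) k :=
  ∑ i, ∑ j, ∑ l,
    (LinearMap.toSpanSingleton k _ ((mE i l : Matrix (Fin n) (Fin n) k) ⊗ₜ[k] mE l j)) ∘ₗ
      mEntry i j

/-- Counit (trace) on the matrix coalgebra. -/
def matCounit : Matrix (Fin n) (Fin n) k →ₗ[k] k := ∑ i, mEntry i i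

lemma matCounit_apply (c : Matrix (Fin n) (Fin n) k) :
    matCounit (k := k) c = ∑ i, c i i := by
  simp [matCounit, LinearMap.sum_apply]

lemma matCounit_mE (i j : Fin n) :
    matCounit (k := k) (mE i j) = if i = j then 1 else 0 := by
  rw [matCounit_apply]
  by_cases h : i = j
  · subst h
    simp [mE_apply]
  · rw [if_neg h]
    refine Finset.sum_eq_zero fun p _ => ?_
    rw [mE_apply, if_neg]
    rintro ⟨rfl, rfl⟩
    exact h rfl

lemma matComul_apply (c : Matrix (Fin n) (Fin n) k) :
    matComul (k := k) c =
      ∑ i, ∑ j, ∑ l, c i j • ((mE i l : Matrix (Fin n) (Fin n) k) ⊗ₜ[k] mE l j) := by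
  simp [matComul, LinearMap.sum_apply, LinearMap.toSpanSingleton_apply]

lemma matComul_mE (i j : Fin n) :
    matComul (k := k) (mE i j) =
      ∑ l, (mE i l : Matrix (Fin n) (Fin n) k) ⊗ₜ[k] mE l j := by
  rw [matComul_apply]
  simp_rw [← Finset.smul_sum]
  exact sum_mE_smul i j _

/-- The matrix coalgebra. -/
noncomputable def matrixCoalgebra : Coalgebra k (Matrix (Fin n) (Fin n) k) where
  comul := matComul
  counit := matCounit
  coassoc := by
    apply LinearMap.ext
    intro c
    simp only [LinearMap.comp_apply]
    rw [matComul_apply]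
    simp only [map_sum, map_smul, LinearMap.rTensor_tmul, LinearMap.lTensor_tmul,
      matComul_mE, TensorProduct.sum_tmul, TensorProduct.tmul_sum, map_sum,
      LinearEquiv.coe_coe, TensorProduct.assoc_tmul, Finset.smul_sum]
    refine Finset.sum_congr rfl fun i _ => Finset.sum_congr rfl fun j _ => ?_
    rw [Finset.sum_comm]
  rTensor_counit_comp_comul := by
    apply LinearMap.ext
    intro c
    simp only [LinearMap.comp_apply]
    rw [matComul_apply]
    simp only [map_sum, map_smul, LinearMap.rTensor_tmul, matCounit_mE,
      TensorProduct.ite_tmul]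
    have : ∀ i j : Fin n,
        (∑ l, c i j • if i = l then (1 : k) ⊗ₜ[k] (mE (k := k) l j) else 0)
          = c i j • ((1 : k) ⊗ₜ[k] (mE (k := k) i j)) := by
      intro i j
      rw [← Finset.smul_sum]
      congr 1
      simp
    simp only [this]
    conv_rhs => rw [show ((TensorProduct.mk k k (Matrix (Fin n) (Fin n) k)) 1) c
      = (1 : k) ⊗ₜ[k] c from rfl, ← sum_smul_mE (c := c)]
    simp [TensorProduct.tmul_sum, TensorProduct.tmul_smul]
  lTensor_counit_comp_comul := by
    apply LinearMap.ext
    intro c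
    simp only [LinearMap.comp_apply]
    rw [matComul_apply]
    simp only [map_sum, map_smul, LinearMap.lTensor_tmul, matCounit_mE,
      TensorProduct.tmul_ite]
    have : ∀ i j : Fin n,
        (∑ l, c i j • if l = j then (mE (k := k) i l) ⊗ₜ[k] (1 : k) else 0)
          = c i j • ((mE (k := k) i j) ⊗ₜ[k] (1 : k)) := by
      intro i j
      rw [← Finset.smul_sum]
      congr 1
      simp
    simp only [this]
    conv_rhs => rw [show ((TensorProduct.mk k (Matrix (Fin n) (Fin n) k) k).flip 1) c
        = c ⊗ₜ[k] (1 : k) from rfl, ← sum_smul_mE (c := c)]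
    simp [TensorProduct.sum_tmul, TensorProduct.smul_tmul']

end MatrixCoalgebra
section MatrixMeasuring

open Coalgebra

variable {k : Type u} [CommRing k] {A : Type u} [Ring A] [Algebra k A] {n : ℕ}

attribute [local instance] matrixCoalgebra

/-- The measuring `A →ₗ[k] Hom(M_n(k), k)` attached to a representation `ρ`. -/
noncomputable def matPhi (ρ : A →ₐ[k] Matrix (Fin n) (Fin n) k) :
    A →ₗ[k] Matrix (Fin n) (Fin n) k →ₗ[k] k where
  toFun a := ∑ i, ∑ j, ρ a i j • mEntry i j
  map_add' a b := by
    simp only [map_add, Matrix.add_apply, add_smul, Finset.sum_add_distrib]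
  map_smul' c a := by
    simp only [map_smul, Matrix.smul_apply, RingHom.id_apply, Finset.smul_sum, smul_assoc]

lemma matPhi_apply (ρ : A →ₐ[k] Matrix (Fin n) (Fin n) k) (a : A)
    (c : Matrix (Fin n) (Fin n) k) :
    matPhi ρ a c = ∑ i, ∑ j, ρ a i j * c i j := by
  show (∑ i, ∑ j, ρ a i j • mEntry (k := k) i j) c = _
  rw [LinearMap.sum_apply]
  refine Finset.sum_congr rfl fun i _ => ?_
  rw [LinearMap.sum_apply]
  rfl

lemma matPhi_mE (ρ : A →ₐ[k] Matrix (Fin n) (Fin n) k) (a : A) (i j : Fin n) :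
    matPhi ρ a (mE i j) = ρ a i j := by
  rw [matPhi_apply]
  have : ∀ p q : Fin n, ρ a p q * (mE (k := k) i j) p q
      = (mE (k := k) i j) p q • ρ a p q := fun p q => by
    rw [smul_eq_mul, mul_comm]
  simp_rw [this]
  exact sum_mE_smul i j _

lemma isMeasuring_matPhi (ρ : A →ₐ[k] Matrix (Fin n) (Fin n) k) :
    IsMeasuring (matPhi ρ) := by
  constructor
  · apply LinearMap.ext
    intro c
    rw [matPhi_apply, map_one]
    show _ = (Algebra.linearMap k k) (matCounit c)
    rw [matCounit_apply]
    simp [Matrix.one_apply, ite_mul]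
  · intro a a'
    apply LinearMap.ext
    intro c
    rw [matPhi_apply, map_mul]
    show _ = LinearMap.mul' k k (TensorProduct.map (matPhi ρ a) (matPhi ρ a') (matComul c))
    rw [matComul_apply]
    simp only [map_sum, map_smul, TensorProduct.map_tmul, LinearMap.mul'_apply,
      matPhi_mE, smul_eq_mul]
    simp only [Matrix.mul_apply, Finset.sum_mul, Finset.mul_sum]
    refine Finset.sum_congr rfl fun i _ => Finset.sum_congr rfl fun j _ =>
      Finset.sum_congr rfl fun l _ => by ring

end MatrixMeasuring

/-- Let `A` be an algebra over a field `k` and `Adual` its finite dual coalgebra (the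
universal measuring coalgebra `P(A,k)`, characterized by
`Alg_k(A, C^*) ≅ Coalg_k(C, Adual)`).  Then `Adual ≅ k` as coalgebras if and only if `A`
admits an augmentation `A → k` and every finite-dimensional `A`-module is a direct sum
of copies of the module `k` (with `A` acting through the augmentation). -/
theorem finiteDual_iso_base_iff
    {k : Type u} [Field k] {A : Type u} [Ring A] [Algebra k A]
    (Adual : Type u) [AddCommGroup Adual] [Module k Adual] [Coalgebra k Adual]
    (hAdual : IsUniversalMeasuring (k := k) A k Adual) :
    Nonempty (Adual ≃ₗc[k] k) ↔
      ∃ aug : A →ₐ[k] k,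
        ∀ (M : Type u) [AddCommGroup M] [Module k M] [Module A M]
          [IsScalarTower k A M] [FiniteDimensional k M],
          ∃ n : ℕ,
            letI : Module A k := Module.compHom k aug.toRingHom
            Nonempty (M ≃ₗ[A] (Fin n → k)) := by
  constructor
  · rintro ⟨E⟩
    set ψ := (hAdual.equiv k).symm E.symm.toCoalgHom with hψdef
    have hψeq : hAdual.equiv k ψ = E.symm.toCoalgHom := (hAdual.equiv k).apply_symm_apply _
    have h1 : ψ.1 1 1 = 1 := by
      rw [ψ.2.1]
      simp [convOneL]
    have hmul : ∀ a b : A, ψ.1 (a * b) 1 = ψ.1 a 1 * ψ.1 b 1 := by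
      intro a b
      rw [ψ.2.2 a b]
      simp [convMulL, CommSemiring.comul_apply, LinearMap.mul'_apply]
    set aug : A →ₐ[k] k := AlgHom.ofLinearMap (ψ.1.flip 1) h1 hmul with haugdef
    have haug : ∀ a, aug a = ψ.1 a 1 := fun a => rfl
    have hψap : ∀ (a : A) (t : k), ψ.1 a t = t * aug a := by
      intro a t
      have h7 := map_smul (ψ.1 a) t (1 : k)
      rw [smul_eq_mul, mul_one, smul_eq_mul] at h7
      rw [h7, haug]
    refine ⟨aug, ?_⟩
    intro M _ _ _ _ _
    letI : SMulCommClass A k M := ⟨fun a c m => by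
      rw [← algebraMap_smul A c m, ← mul_smul, ← Algebra.commutes, mul_smul, algebraMap_smul]⟩
    set nn := Module.finrank k M with hnn
    set b : Module.Basis (Fin nn) k M := Module.finBasis k M with hb
    set ρ : A →ₐ[k] Matrix (Fin nn) (Fin nn) k :=
      (LinearMap.toMatrixAlgEquiv b).toAlgHom.comp (Algebra.lsmul k k M) with hρ
    letI : Coalgebra k (Matrix (Fin nn) (Fin nn) k) := matrixCoalgebra
    set φ : {φ : A →ₗ[k] Matrix (Fin nn) (Fin nn) k →ₗ[k] k // IsMeasuring φ} :=
      ⟨matPhi ρ, isMeasuring_matPhi ρ⟩ with hφdef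
    set g₀ := hAdual.equiv (Matrix (Fin nn) (Fin nn) k) φ with hg₀
    set G := E.toCoalgHom.comp g₀ with hGdef
    have h' := isMeasuring_restrict (k := k) G ψ.2
    have nat := hAdual.naturality (Matrix (Fin nn) (Fin nn) k) k G ψ h'
    have hcomp : (hAdual.equiv k ψ).comp G = g₀ := by
      rw [hψeq, hGdef]
      apply CoalgHom.ext
      intro c
      show E.symm.toCoalgHom (E.toCoalgHom (g₀ c)) = g₀ c
      simp
    have hrest : measRestrict G.toLinearMap ψ.1 = φ.1 := by
      have h2 := (hAdual.equiv _).injective (nat.trans hcomp)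
      exact congrArg Subtype.val h2
    have hGg : G = Coalgebra.counitCoalgHom k (Matrix (Fin nn) (Fin nn) k) :=
      Subsingleton.elim _ _
    have hent : ∀ (a : A) (i j : Fin nn), ρ a i j = if i = j then aug a else 0 := by
      intro a i j
      have h3 : (measRestrict G.toLinearMap ψ.1) a (mE i j) = matPhi ρ a (mE i j) := by
        rw [hrest]
      rw [matPhi_mE] at h3
      rw [← h3, measRestrict_apply, LinearMap.comp_apply, hGg]
      show ψ.1 a (matCounit (mE i j)) = _
      rw [hψap, matCounit_mE]
      by_cases h : i = j <;> simp [h]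
    have hsmulM : ∀ (a : A) (m : M), a • m = aug a • m := by
      intro a m
      have h4 : ρ a = aug a • (1 : Matrix (Fin nn) (Fin nn) k) := by
        funext i j
        rw [hent]
        by_cases h : i = j <;>
          simp [Matrix.smul_apply, Matrix.one_apply, h]
      have h5 : (Algebra.lsmul k k M : A →ₐ[k] Module.End k M) a
          = aug a • (1 : Module.End k M) := by
        apply (LinearMap.toMatrixAlgEquiv b).injective
        have : (LinearMap.toMatrixAlgEquiv b) ((Algebra.lsmul k k M) a) = ρ a := rfl
        rw [this, h4, map_smul, map_one]
      have h6 := LinearMap.congr_fun h5 m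
      simpa using h6
    refine ⟨nn, ?_⟩
    letI : Module A k := Module.compHom k aug.toRingHom
    refine ⟨{ toFun := b.equivFun,
              map_add' := fun x y => map_add b.equivFun x y,
              map_smul' := fun a m => ?_,
              invFun := b.equivFun.symm,
              left_inv := fun m => b.equivFun.symm_apply_apply m,
              right_inv := fun v => b.equivFun.apply_symm_apply v }⟩
    show b.equivFun (a • m) = a • b.equivFun m
    rw [hsmulM a m, map_smul]
    funext i
    rfl
  · rintro ⟨aug, hmod⟩
    set ψ : {φ : A →ₗ[k] k →ₗ[k] k // IsMeasuring φ} :=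
      ⟨augMeas aug, isMeasuring_augMeas aug⟩ with hψdef
    set u := hAdual.equiv k ψ with hu
    set εh := Coalgebra.counitCoalgHom k Adual with hε
    set Φ := (hAdual.equiv Adual).symm (CoalgHom.id k Adual) with hΦdef
    have hΦ : hAdual.equiv Adual Φ = CoalgHom.id k Adual :=
      (hAdual.equiv Adual).apply_symm_apply _
    have key : ∀ (a : A) (x : Adual), Φ.1 a x = aug a * Coalgebra.counit x :=
      measuring_trivial_of_modules_trivial aug Φ.1 Φ.2 hmod
    have hrest : measRestrict εh.toLinearMap ψ.1 = Φ.1 := by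
      apply LinearMap.ext
      intro a
      apply LinearMap.ext
      intro x
      rw [measRestrict_apply, LinearMap.comp_apply]
      show augMeas aug a (Coalgebra.counit x) = _
      rw [augMeas_apply, key]
    have h' : IsMeasuring (measRestrict εh.toLinearMap ψ.1) := hrest ▸ Φ.2
    have nat := hAdual.naturality Adual k εh ψ h'
    have heq : hAdual.equiv Adual ⟨measRestrict εh.toLinearMap ψ.1, h'⟩
        = CoalgHom.id k Adual := by
      rw [show (⟨measRestrict εh.toLinearMap ψ.1, h'⟩ :
        {φ : A →ₗ[k] Adual →ₗ[k] k // IsMeasuring φ}) = Φ from Subtype.ext hrest, hΦ]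
    have huε : u.comp εh = CoalgHom.id k Adual := by rw [← nat, heq]
    refine ⟨⟨εh, ⇑u, fun x => ?_, fun t => ?_⟩⟩
    · have := CoalgHom.congr_fun huε x
      simpa using this
    · exact (CoalgHomClass.counit_comp_apply (R := k) u t).trans rfl
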